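/- Let A be a symmetric special Frobenius algebra in a sovereign monoidal category C with ε ∘ η = dim(A)·id_1, dim(A) ≠ 0. Then A is nondegenerate: the morphism [(ε_♮ ∘ m) ⊗ id_{A^∨}] ∘ (id_A ⊗ b_A) ∈ Hom(A, A^∨), with ε_♮ := d_A ∘ (id_{A^∨} ⊗ m) ∘ (b̃_A ⊗ id_A), is an isomorphism, with inverse (d_A ⊗ id_A) ∘ (id_{A^∨} ⊗ (Δ ∘ η)). -/
import Mathlib


open CategoryTheory MonoidalCategory

variable {C : Type*} [Category C] [MonoidalCategory C]

/-- The morphism `ε_♮ := d_A ∘ (id_{A^∨} ⊗ m) ∘ (b̃_A ⊗ id_A) : A ⟶ 𝟙`. -/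
def epsNat (A Av : C) (m : A ⊗ A ⟶ A)
    (d : Av ⊗ A ⟶ 𝟙_ C) (bt : 𝟙_ C ⟶ Av ⊗ A) : A ⟶ 𝟙_ C :=
  (λ_ A).inv ≫ (bt ▷ A) ≫ (α_ Av A A).hom ≫ (Av ◁ m) ≫ d

/-- The morphism `[(ε_♮ ∘ m) ⊗ id_{A^∨}] ∘ (id_A ⊗ b_A) : A ⟶ A^∨`. -/
def nondegMap (A Av : C) (m : A ⊗ A ⟶ A) (b : 𝟙_ C ⟶ A ⊗ Av)
    (d : Av ⊗ A ⟶ 𝟙_ C) (bt : 𝟙_ C ⟶ Av ⊗ A) : A ⟶ Av :=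
  (ρ_ A).inv ≫ (A ◁ b) ≫ (α_ A A Av).inv ≫ ((m ≫ epsNat A Av m d bt) ▷ Av) ≫
    (λ_ Av).hom

/-- The candidate inverse `(d_A ⊗ id_A) ∘ (id_{A^∨} ⊗ (Δ ∘ η)) : A^∨ ⟶ A`. -/
def nondegInv (A Av : C) (η : 𝟙_ C ⟶ A) (Δ : A ⟶ A ⊗ A)
    (d : Av ⊗ A ⟶ 𝟙_ C) : Av ⟶ A :=
  (ρ_ Av).inv ≫ (Av ◁ (η ≫ Δ)) ≫ (α_ Av A A).inv ≫ (d ▷ A) ≫ (λ_ A).hom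

/-- a symmetric special Frobenius algebra `A` in a sovereign monoidal
category is nondegenerate: `[(ε_♮ ∘ m) ⊗ id_{A^∨}] ∘ (id_A ⊗ b_A) : A ⟶ A^∨` is an
isomorphism with inverse `(d_A ⊗ id_A) ∘ (id_{A^∨} ⊗ (Δ ∘ η))`. -/
theorem stmt_9 [Preadditive C]
    (A Av : C) (m : A ⊗ A ⟶ A) (η : 𝟙_ C ⟶ A) (Δ : A ⟶ A ⊗ A) (ε : A ⟶ 𝟙_ C)
    -- right duality (b_A, d_A) and left duality (b̃_A, d̃_A) with the same dual
    -- object `Av` (sovereignty)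
    (b : 𝟙_ C ⟶ A ⊗ Av) (d : Av ⊗ A ⟶ 𝟙_ C)
    (bt : 𝟙_ C ⟶ Av ⊗ A) (dt : A ⊗ Av ⟶ 𝟙_ C)
    (hzig₁ : (λ_ A).inv ≫ (b ▷ A) ≫ (α_ A Av A).hom ≫ (A ◁ d) ≫ (ρ_ A).hom = 𝟙 A)
    (hzig₂ : (ρ_ Av).inv ≫ (Av ◁ b) ≫ (α_ Av A Av).inv ≫ (d ▷ Av) ≫ (λ_ Av).hom
        = 𝟙 Av)
    (hzig₃ : (ρ_ A).inv ≫ (A ◁ bt) ≫ (α_ A Av A).inv ≫ (dt ▷ A) ≫ (λ_ A).hom = 𝟙 A)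
    (hzig₄ : (λ_ Av).inv ≫ (bt ▷ Av) ≫ (α_ Av A Av).hom ≫ (Av ◁ dt) ≫ (ρ_ Av).hom
        = 𝟙 Av)
    -- Frobenius algebra axioms
    (hassoc : (α_ A A A).hom ≫ (A ◁ m) ≫ m = (m ▷ A) ≫ m)
    (hunitl : (λ_ A).inv ≫ (η ▷ A) ≫ m = 𝟙 A)
    (hunitr : (ρ_ A).inv ≫ (A ◁ η) ≫ m = 𝟙 A)
    (hcoassoc : Δ ≫ (Δ ▷ A) ≫ (α_ A A A).hom = Δ ≫ (A ◁ Δ))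
    (hcounitl : Δ ≫ (ε ▷ A) ≫ (λ_ A).hom = 𝟙 A)
    (hcounitr : Δ ≫ (A ◁ ε) ≫ (ρ_ A).hom = 𝟙 A)
    (hfrob1 : (Δ ▷ A) ≫ (α_ A A A).hom ≫ (A ◁ m) = m ≫ Δ)
    (hfrob2 : (A ◁ Δ) ≫ (α_ A A A).inv ≫ (m ▷ A) = m ≫ Δ)
    -- special, with normalization m ∘ Δ = id and ε ∘ η = dim(A)·id ≠ 0
    (hspecial : Δ ≫ m = 𝟙 A)
    (hdim : η ≫ ε ≠ 0)
    -- symmetry: the canonical automorphism of A equals the identity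
    (hsym : (λ_ A).inv ≫ (bt ▷ A) ≫ (α_ Av A A).hom ≫
        (Av ◁ (m ≫ ε ≫ η ≫ Δ)) ≫ (α_ Av A A).inv ≫ (d ▷ A) ≫ (λ_ A).hom = 𝟙 A) :
    nondegMap A Av m b d bt ≫ nondegInv A Av η Δ d = 𝟙 A ∧
    nondegInv A Av η Δ d ≫ nondegMap A Av m b d bt = 𝟙 Av := by
  -- `γ := η ≫ Δ` together with `β := m ≫ ε` is a (two-sided) self-duality on `A`.
  have LemA : (ρ_ A).inv ≫ (A ◁ (η ≫ Δ)) ≫ (α_ A A A).inv ≫ (m ▷ A) = Δ := by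
    rw [MonoidalCategory.whiskerLeft_comp]
    slice_lhs 3 5 => rw [hfrob2]
    slice_lhs 1 3 => rw [hunitr]
    simp
  have LemB : (λ_ A).inv ≫ ((η ≫ Δ) ▷ A) ≫ (α_ A A A).hom ≫ (A ◁ m) = Δ := by
    rw [MonoidalCategory.comp_whiskerRight]
    slice_lhs 3 5 => rw [hfrob1]
    slice_lhs 1 3 => rw [hunitl]
    simp
  have Z1 : (λ_ A).inv ≫ ((η ≫ Δ) ▷ A) ≫ (α_ A A A).hom ≫ (A ◁ m) ≫ (A ◁ ε) ≫
      (ρ_ A).hom = 𝟙 A := by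
    slice_lhs 1 4 => rw [LemB]
    simpa using hcounitr
  have Z2 : (ρ_ A).inv ≫ (A ◁ (η ≫ Δ)) ≫ (α_ A A A).inv ≫ (m ▷ A) ≫ (ε ▷ A) ≫
      (λ_ A).hom = 𝟙 A := by
    slice_lhs 1 4 => rw [LemA]
    simpa using hcounitl
  -- `hsym` says `Φ₂ ≫ Ψ = 𝟙` for `Φ₂` built from `bt` and `m ≫ ε`.
  have L5 : ((λ_ A).inv ≫ (bt ▷ A) ≫ (α_ Av A A).hom ≫ (Av ◁ (m ≫ ε)) ≫ (ρ_ Av).hom) ≫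
      nondegInv A Av η Δ d = 𝟙 A := by
    unfold nondegInv
    simp only [MonoidalCategory.whiskerLeft_comp, Category.assoc] at hsym ⊢
    simpa using hsym
  -- KEY1 : `(η ≫ Δ) ≫ (Φ₂ ▷ A) = bt`
  have KEY1 : (η ≫ Δ) ≫
      (((λ_ A).inv ≫ (bt ▷ A) ≫ (α_ Av A A).hom ≫ (Av ◁ (m ≫ ε)) ≫ (ρ_ Av).hom) ▷ A)
      = bt := by
    have h1 : (η ≫ Δ) ≫
        (((λ_ A).inv ≫ (bt ▷ A) ≫ (α_ Av A A).hom ≫ (Av ◁ (m ≫ ε)) ≫ (ρ_ Av).hom) ▷ A)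
        = (λ_ (𝟙_ C)).inv ≫ (𝟙_ C ◁ (η ≫ Δ)) ≫ (bt ▷ (A ⊗ A)) ≫
          (α_ Av A (A ⊗ A)).hom ≫
          (Av ◁ ((α_ A A A).inv ≫ ((m ≫ ε) ▷ A) ≫ (λ_ A).hom)) := by
      monoidal
    rw [h1, whisker_exchange_assoc]
    have h2 : (λ_ (𝟙_ C)).inv ≫ (bt ▷ (𝟙_ C)) ≫ ((Av ⊗ A) ◁ (η ≫ Δ)) ≫
          (α_ Av A (A ⊗ A)).hom ≫
          (Av ◁ ((α_ A A A).inv ≫ ((m ≫ ε) ▷ A) ≫ (λ_ A).hom))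
        = bt ≫ (Av ◁ ((ρ_ A).inv ≫ (A ◁ (η ≫ Δ)) ≫ (α_ A A A).inv ≫ (m ▷ A) ≫
            (ε ▷ A) ≫ (λ_ A).hom)) := by
      monoidal
    rw [h2, Z2]
    simp
  -- KEY : `bt ≫ (Ψ ▷ A) = η ≫ Δ`
  have KEY : bt ≫ ((nondegInv A Av η Δ d) ▷ A) = η ≫ Δ := by
    rw [← KEY1, Category.assoc, ← MonoidalCategory.comp_whiskerRight, L5]
    simp
  -- Dlem : `(Ψ ▷ A) ≫ m ≫ ε = d`
  have Dlem : ((nondegInv A Av η Δ d) ▷ A) ≫ m ≫ ε = d := by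
    have k1 : ((nondegInv A Av η Δ d) ▷ A) ≫ m ≫ ε
        = ((ρ_ Av).inv ▷ A) ≫ (((Av ◁ (η ≫ Δ))) ▷ A) ≫ (((α_ Av A A).inv) ▷ A) ≫
          (α_ (Av ⊗ A) A A).hom ≫ (d ▷ (A ⊗ A)) ≫ (𝟙_ C ◁ (m ≫ ε)) ≫
          (λ_ (𝟙_ C)).hom := by
      unfold nondegInv
      monoidal
    rw [k1, ← whisker_exchange_assoc]
    have k3 : ((ρ_ Av).inv ▷ A) ≫ (((Av ◁ (η ≫ Δ))) ▷ A) ≫ (((α_ Av A A).inv) ▷ A) ≫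
          (α_ (Av ⊗ A) A A).hom ≫ ((Av ⊗ A) ◁ (m ≫ ε)) ≫ (d ▷ (𝟙_ C)) ≫
          (λ_ (𝟙_ C)).hom
        = (Av ◁ ((λ_ A).inv ≫ ((η ≫ Δ) ▷ A) ≫ (α_ A A A).hom ≫ (A ◁ m) ≫ (A ◁ ε) ≫
            (ρ_ A).hom)) ≫ d := by
      monoidal
    rw [k3, Z1]
    simp
  -- the natural counit `ε_♮` coincides with `ε`
  have ENAT : epsNat A Av m d bt = ε := by
    unfold epsNat
    conv_lhs => rw [← Dlem]
    rw [whisker_exchange_assoc]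
    have s1 : (λ_ A).inv ≫ (bt ▷ A) ≫ (α_ Av A A).hom ≫
          ((nondegInv A Av η Δ d) ▷ (A ⊗ A)) ≫ (A ◁ m) ≫ m ≫ ε
        = (λ_ A).inv ≫ ((bt ≫ ((nondegInv A Av η Δ d) ▷ A)) ▷ A) ≫ (α_ A A A).hom ≫
          (A ◁ m) ≫ m ≫ ε := by
      monoidal
    rw [s1, KEY]
    slice_lhs 1 4 => rw [LemB]
    slice_lhs 1 2 => rw [hspecial]
    simp
  -- snake lemma : `b ≫ (A ◁ Ψ) = η ≫ Δ`
  have SN : b ≫ (A ◁ nondegInv A Av η Δ d) = η ≫ Δ := by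
    have sn1 : b ≫ (A ◁ nondegInv A Av η Δ d)
        = (ρ_ (𝟙_ C)).inv ≫ (b ▷ (𝟙_ C)) ≫ ((A ⊗ Av) ◁ (η ≫ Δ)) ≫
          (α_ A Av (A ⊗ A)).hom ≫
          (A ◁ ((α_ Av A A).inv ≫ (d ▷ A) ≫ (λ_ A).hom)) := by
      unfold nondegInv
      monoidal
    rw [sn1, ← whisker_exchange_assoc]
    have sn3 : (ρ_ (𝟙_ C)).inv ≫ (𝟙_ C ◁ (η ≫ Δ)) ≫ (b ▷ (A ⊗ A)) ≫
          (α_ A Av (A ⊗ A)).hom ≫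
          (A ◁ ((α_ Av A A).inv ≫ (d ▷ A) ≫ (λ_ A).hom))
        = (η ≫ Δ) ≫ (((λ_ A).inv ≫ (b ▷ A) ≫ (α_ A Av A).hom ≫ (A ◁ d) ≫
            (ρ_ A).hom) ▷ A) := by
      monoidal
    rw [sn3, hzig₁]
    simp
  constructor
  · -- `Φ ≫ Ψ = 𝟙 A`
    unfold nondegMap
    rw [ENAT]
    have g1a : ((ρ_ A).inv ≫ (A ◁ b) ≫ (α_ A A Av).inv ≫ ((m ≫ ε) ▷ Av) ≫
          (λ_ Av).hom) ≫ nondegInv A Av η Δ d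
        = (ρ_ A).inv ≫ (A ◁ b) ≫ (α_ A A Av).inv ≫ ((m ≫ ε) ▷ Av) ≫
          (𝟙_ C ◁ nondegInv A Av η Δ d) ≫ (λ_ A).hom := by
      monoidal
    rw [g1a, ← whisker_exchange_assoc]
    have g1c : (ρ_ A).inv ≫ (A ◁ b) ≫ (α_ A A Av).inv ≫
          ((A ⊗ A) ◁ nondegInv A Av η Δ d) ≫ ((m ≫ ε) ▷ A) ≫ (λ_ A).hom
        = (ρ_ A).inv ≫ (A ◁ (b ≫ (A ◁ nondegInv A Av η Δ d))) ≫ (α_ A A A).inv ≫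
          (m ▷ A) ≫ (ε ▷ A) ≫ (λ_ A).hom := by
      monoidal
    rw [g1c, SN, Z2]
  · -- `Ψ ≫ Φ = 𝟙 Av`
    unfold nondegMap
    rw [ENAT]
    have q1 : nondegInv A Av η Δ d ≫ ((ρ_ A).inv ≫ (A ◁ b) ≫ (α_ A A Av).inv ≫
          ((m ≫ ε) ▷ Av) ≫ (λ_ Av).hom)
        = (ρ_ Av).inv ≫ ((nondegInv A Av η Δ d) ▷ (𝟙_ C)) ≫ (A ◁ b) ≫
          (α_ A A Av).inv ≫ ((m ≫ ε) ▷ Av) ≫ (λ_ Av).hom := by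
      monoidal
    rw [q1, ← whisker_exchange_assoc]
    have q3 : (ρ_ Av).inv ≫ (Av ◁ b) ≫ ((nondegInv A Av η Δ d) ▷ (A ⊗ Av)) ≫
          (α_ A A Av).inv ≫ ((m ≫ ε) ▷ Av) ≫ (λ_ Av).hom
        = (ρ_ Av).inv ≫ (Av ◁ b) ≫ (α_ Av A Av).inv ≫
          ((((nondegInv A Av η Δ d) ▷ A) ≫ m ≫ ε) ▷ Av) ≫ (λ_ Av).hom := by
      monoidal
    rw [q3, Dlem]
    exact hzig₂
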